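/- Let D be a 2-connected rooted digraph. Then there exists an r-r numbering of D, i.e. a linear ordering σ of V(D)−r such that for every vertex x ≠ r, either x is an outneighbour of r, or there exist two in-neighbours u and v of x with σ(u) < σ(x) < σ(v). -/

import Mathlib

variable {V : Type*}

/-- Reachability by directed paths in a digraph given by its arc relation. -/
def Reaches (A : V → V → Prop) : V → V → Prop :=
  Relation.ReflTransGen A

/-- Reachability by directed paths avoiding the vertex set `S` (i.e. in `D − S`). -/
def ReachesAvoiding (A : V → V → Prop) (S : Set V) : V → V → Prop :=
  Relation.ReflTransGen (fun u v => A u v ∧ u ∉ S ∧ v ∉ S)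

/-- A rooted digraph: loopless, the distinguished root `r` has indegree 0 and at
least two outneighbours, and there is no arc `(x, y)` with `x ≠ r` and `y` an
outneighbour of `r`. -/
def IsRootedDigraph (A : V → V → Prop) (r : V) : Prop :=
  (∀ v, ¬ A v v) ∧
  (∀ v, ¬ A v r) ∧
  (∃ u v, u ≠ v ∧ A r u ∧ A r v) ∧
  ∀ x y, x ≠ r → A r y → ¬ A x y

/-- A rooted digraph is connected if every vertex is reachable from the root. -/
def RConnected (A : V → V → Prop) (r : V) : Prop :=
  ∀ v, Reaches A r v

/-- `S` is a cut of the rooted digraph: `S ⊆ V − r` and some vertex outside `S`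
is the endpoint of no directed path from `r` in `D − S`. -/
def IsCut (A : V → V → Prop) (r : V) (S : Set V) : Prop :=
  r ∉ S ∧ ∃ z ∉ S, ¬ ReachesAvoiding A S r z

/-- A rooted digraph is 2-connected if it has no cut of size at most 1. -/
def TwoConnected (A : V → V → Prop) (r : V) : Prop :=
  ∀ S : Set V, S.ncard ≤ 1 → ¬ IsCut A r S

/-- `T` is an outbranching of the rooted digraph `(A, r)`: a spanning directed
tree rooted at `r` (every vertex other than `r` has a unique in-arc in `T`, the
root has none, and every vertex is reachable from `r` in `T`). -/
def IsOutbranching (A : V → V → Prop) (r : V) (T : V → V → Prop) : Prop :=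
  (∀ u v, T u v → A u v) ∧
  (∀ v, v ≠ r → ∃! u, T u v) ∧
  (∀ u, ¬ T u r) ∧
  ∀ v, Reaches T r v

/-- The number of leaves (vertices of outdegree 0) of an outbranching `T`. -/
noncomputable def leafCount (T : V → V → Prop) : ℕ :=
  {v | ∀ u, ¬ T v u}.ncard

/-- The maximum number of leaves over all outbranchings. -/
noncomputable def maxleaf (A : V → V → Prop) (r : V) : ℕ :=
  sSup {n | ∃ T : V → V → Prop, IsOutbranching A r T ∧ n = leafCount T}

/-- Indegree of a vertex. -/
noncomputable def indeg (A : V → V → Prop) (v : V) : ℕ := {u | A u v}.ncard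

/-- Outdegree of a vertex. -/
noncomputable def outdeg (A : V → V → Prop) (v : V) : ℕ := {u | A v u}.ncard

/-- A vertex is nice if it has a simple in-arc, i.e. an in-arc not belonging to
a 2-circuit. -/
def Nice (A : V → V → Prop) (v : V) : Prop := ∃ u, A u v ∧ ¬ A v u

/-- A vertex is special if it has indegree at least 3 or a simple in-arc. -/
def Special (A : V → V → Prop) (v : V) : Prop := 3 ≤ indeg A v ∨ Nice A v

/-- A non-special vertex: distinct from `r`, with exactly two in-neighbours,
both of which are also its outneighbours. -/
def NonSpecial (A : V → V → Prop) (r : V) (v : V) : Prop :=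
  v ≠ r ∧ ∃ a b, a ≠ b ∧ {u | A u v} = {a, b} ∧ A v a ∧ A v b

/-- `x 0, …, x 4` is a bipath of length 4: the arcs of `D` incident to the
internal vertices `x 1, x 2, x 3` are exactly the arcs `(x i, x (i+1))` and
`(x (i+1), x i)` of the bipath. -/
def IsBipath4 (A : V → V → Prop) (x : Fin 5 → V) : Prop :=
  Function.Injective x ∧
  ∀ i : Fin 5, 0 < (i : ℕ) → (i : ℕ) < 4 →
    (∀ v, A (x i) v ↔ v = x (i - 1) ∨ v = x (i + 1)) ∧
    (∀ v, A v (x i) ↔ v = x (i - 1) ∨ v = x (i + 1))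

/-- A digraph is acyclic if it has no directed cycle. -/
def Acyclic (A : V → V → Prop) : Prop :=
  ∀ u v, A u v → ¬ Reaches A v u

/-- Every 2-connected rooted digraph admits an `r-r` numbering:
a linear ordering `σ` of `V − r` such that every vertex `x ≠ r` is either an
outneighbour of `r` or has two in-neighbours `u, v` with `σ u < σ x < σ v`. -/
def CRch (B : V → V → Prop) (N : Set V) (S : Set V) (z : V) : Prop :=
  ∃ n, n ∈ N ∧ n ∉ S ∧ Relation.ReflTransGen (fun a b => B a b ∧ b ∉ S) n z

namespace CRch
variable {B : V → V → Prop} {N : Set V}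
theorem mono {S S' : Set V} (h : S ⊆ S') {z : V} (hz : CRch B N S' z) : CRch B N S z := by
  obtain ⟨n, hn, hnS, hp⟩ := hz
  exact ⟨n, hn, fun hx => hnS (h hx),
    Relation.ReflTransGen.mono (fun a b hab => ⟨hab.1, fun hb => hab.2 (h hb)⟩) _ _ hp⟩
theorem notMem {S : Set V} {z : V} (hz : CRch B N S z) : z ∉ S := by
  obtain ⟨n, hn, hnS, hp⟩ := hz
  induction hp with
  | refl => exact hnS
  | tail _ h _ => exact h.2
theorem ofN {S : Set V} {n : V} (hn : n ∈ N) (hnS : n ∉ S) : CRch B N S n :=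
  ⟨n, hn, hnS, Relation.ReflTransGen.refl⟩
theorem step {S : Set V} {w z : V} (hw : CRch B N S w) (hB : B w z) (hz : z ∉ S) :
    CRch B N S z := by
  obtain ⟨n, hn, hnS, hp⟩ := hw
  exact ⟨n, hn, hnS, hp.tail ⟨hB, hz⟩⟩
theorem cases' {S : Set V} {z : V} (hz : CRch B N S z) :
    (z ∈ N ∧ z ∉ S) ∨ ∃ w, B w z ∧ w ∉ S ∧ CRch B N S w := by
  obtain ⟨n, hn, hnS, hp⟩ := hz
  cases hp.cases_tail with
  | inl h => exact Or.inl ⟨h ▸ hn, h ▸ hnS⟩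
  | inr h =>
    obtain ⟨w, hw, hstep⟩ := h
    refine Or.inr ⟨w, hstep.1, ?_, ⟨n, hn, hnS, hw⟩⟩
    · cases hw.cases_tail with
      | inl h' => exact h' ▸ hnS
      | inr h' => obtain ⟨_, _, hs⟩ := h'; exact hs.2
theorem avoid {S T : Set V} (hNT : ∀ n ∈ N, n ∉ T)
    (hcl : ∀ w v, CRch B N (S ∪ T) w → B w v → v ∉ S → v ∈ T → False) :
    ∀ z, CRch B N S z → z ∉ T ∧ CRch B N (S ∪ T) z := by
  intro z hz
  obtain ⟨n, hn, hnS, hp⟩ := hz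
  induction hp with
  | refl => exact ⟨hNT n hn, ofN hn (by simp [hnS, hNT n hn])⟩
  | tail hab h ih =>
    rename_i b c
    by_cases hcT : c ∈ T
    · exact absurd (hcl b c ih.2 h.1 h.2 hcT) id
    · exact ⟨hcT, ih.2.step h.1 (by simp [h.2, hcT])⟩
end CRch

/-- `z` lies in the fragment of the pair cut `{p,c}`. -/
def Frag2 (B : V → V → Prop) (N : Set V) (W : Finset V) (p c z : V) : Prop :=
  z ∈ W ∧ z ≠ p ∧ z ≠ c ∧ ¬ CRch B N {p, c} z

section Core

variable {B : V → V → Prop} {N : Set V} {W : Finset V}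

theorem Frag2.comm {p c z : V} (h : Frag2 B N W p c z) : Frag2 B N W c p z := by
  obtain ⟨h1, h2, h3, h4⟩ := h
  exact ⟨h1, h3, h2, by rwa [Set.pair_comm c p]⟩

theorem Frag2.notN {p c z : V} (h : Frag2 B N W p c z) : z ∉ N := fun hz =>
  h.2.2.2 (CRch.ofN hz (by simp [h.2.1, h.2.2.1]))

variable (hBW : ∀ u v, B u v → u ∈ W ∧ v ∈ W)
  (h2c1 : ∀ s z : V, z ∈ W → z ≠ s → CRch B N {s} z)

section
include h2c1

include hBW in
/-- Entry lemma: a nonempty fragment of `{p,c}` receives an arc from `p`. -/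
theorem frag_entry {p c f : V} (hf : Frag2 B N W p c f) :
    ∃ v, B p v ∧ Frag2 B N W p c v := by
  obtain ⟨n, hn, hnS, hp⟩ := h2c1 c f hf.1 hf.2.2.1
  have key : ∀ z, Relation.ReflTransGen (fun a b => B a b ∧ b ∉ ({c} : Set V)) n z →
      z ≠ p → ¬ CRch B N {p, c} z → ∃ v, B p v ∧ Frag2 B N W p c v := by
    intro z hz
    induction hz with
    | refl =>
      intro hnp hncr
      exact absurd (CRch.ofN hn (by simp [hnp, hnS])) hncr
    | tail hab h ih =>
      rename_i w z'
      intro hzp hzcr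
      by_cases hwp : w = p
      · exact ⟨z', hwp ▸ h.1, (hBW w z' h.1).2, hzp, by simpa using h.2, hzcr⟩
      · by_cases hwcr : CRch B N {p, c} w
        · exact absurd (hwcr.step h.1 (by simp [hzp, show z' ≠ c by simpa using h.2])) hzcr
        · exact ih hwp hwcr
  exact key f hp hf.2.1 hf.2.2.2

/-- Containment lemma: the fragment of `{p,y}` for `y` in the fragment of `{p,c}`
is contained in that fragment together with `c`. -/
theorem frag_containment {p c y w : V} (hy : Frag2 B N W p c y)
    (hw : Frag2 B N W p y w) (hwc : w ≠ c) : Frag2 B N W p c w := by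
  by_contra hcon
  have hcr : CRch B N {p, c} w := by
    by_contra h
    exact hcon ⟨hw.1, hw.2.1, hwc, h⟩
  set T : Set V := {v | Frag2 B N W p c v} with hT
  have hNT : ∀ n ∈ N, n ∉ T := fun n hn hmem => hmem.notN hn
  have hcl : ∀ w' v, CRch B N ({p, c} ∪ T) w' → B w' v → v ∉ ({p, c} : Set V) →
      v ∈ T → False := by
    intro w' v hw' hB hvS hvT
    exact hvT.2.2.2 ((hw'.mono Set.subset_union_left).step hB hvS)
  have := (CRch.avoid hNT hcl w hcr).2
  have hpy : ({p, y} : Set V) ⊆ {p, c} ∪ T := by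
    intro e he
    rcases he with he | he
    · exact Or.inl (Or.inl he)
    · exact Or.inr (he ▸ hy)
  exact hw.2.2.2 (this.mono hpy)

/-- Lemma R: if `y` is in the fragment of `{p,c}` then `c` is not in the
fragment of `{p,y}`. -/
theorem lemR {p c y : V} (hy : Frag2 B N W p c y) (hq : Frag2 B N W p y c) : False := by
  set T : Set V := {v | Frag2 B N W p c v} ∪ {c} with hT
  have hNT : ∀ n ∈ N, n ∉ T := by
    intro n hn hmem
    rcases hmem with hmem | hmem
    · exact hmem.notN hn
    · exact hq.notN (hmem ▸ hn)
  have hcl : ∀ w' v, CRch B N ({p} ∪ T) w' → B w' v → v ∉ ({p} : Set V) →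
      v ∈ T → False := by
    intro w' v hw' hB hvS hvT
    rcases hvT with hvT | hvT
    · have hsub : ({p, c} : Set V) ⊆ {p} ∪ T := by
        intro e he
        rcases he with he | he
        · exact Or.inl he
        · exact Or.inr (Or.inr he)
      exact hvT.2.2.2 ((hw'.mono hsub).step hB (by simp [hvT.2.1, hvT.2.2.1]))
    · have hsub : ({p, y} : Set V) ⊆ {p} ∪ T := by
        intro e he
        rcases he with he | he
        · exact Or.inl he
        · exact Or.inr (Or.inl (he ▸ hy))
      have : CRch B N {p, y} v := (hw'.mono hsub).step hB
        (by simp [hvT ▸ hq.2.1, hvT ▸ hq.2.2.1])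
      exact hq.2.2.2 (hvT ▸ this)
  have hreach : CRch B N {p} y := h2c1 p y hy.1 hy.2.1
  exact (CRch.avoid hNT hcl y hreach).1 (Or.inl hy)

theorem lemR' {p c y : V} (hy : Frag2 B N W p c y) (hq : Frag2 B N W c y p) : False :=
  lemR h2c1 hy.comm hq

/-- Lemma C: if `{p,q}` is a cut whose fragment has maximum cardinality, `y` is in
its fragment, then `p` is in no fragment of a cut `{y,t}`. -/
theorem lemC [Fintype V] {p q y t : V}
    (hmax : ∀ a b z, Frag2 B N W a b z →
      {z | Frag2 B N W a b z}.ncard ≤ {z | Frag2 B N W p q z}.ncard)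
    (hy : Frag2 B N W p q y) (hpG : Frag2 B N W y t p) : False := by
  have hpq : p ≠ q := by
    intro h
    have : ({p, q} : Set V) = {q} := by rw [h]; simp
    exact hy.2.2.2 (by rw [this]; exact h2c1 q y hy.1 hy.2.2.1)
  have hpN : p ∉ N := hpG.notN
  have hpW : p ∈ W := hpG.1
  -- the avoid instance : reach avoiding {q,t} never touches K ∪ {p}
  set T : Set V := {z | Frag2 B N W p q z} ∪ {p} with hTdef
  have hNT : ∀ n ∈ N, n ∉ T := by
    intro n hn hmem
    rcases hmem with hmem | hmem
    · exact hmem.notN hn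
    · exact hpN (hmem ▸ hn)
  have hcl : ∀ w' v, CRch B N ({q, t} ∪ T) w' → B w' v → v ∉ ({q, t} : Set V) →
      v ∈ T → False := by
    intro w' v hw' hB hvS hvT
    rcases hvT with hvT | hvT
    · have hsub : ({p, q} : Set V) ⊆ {q, t} ∪ T := by
        intro e he
        rcases he with he | he
        · exact Or.inr (Or.inr he)
        · exact Or.inl (Or.inl he)
      exact hvT.2.2.2 ((hw'.mono hsub).step hB (by simp [hvT.2.1, hvT.2.2.1]))
    · have hsub : ({y, t} : Set V) ⊆ {q, t} ∪ T := by
        intro e he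
        rcases he with he | he
        · exact Or.inr (Or.inl (he ▸ hy))
        · exact Or.inl (Or.inr he)
      have : CRch B N {y, t} v := (hw'.mono hsub).step hB
        (by simp [hvT ▸ hpG.2.1, hvT ▸ hpG.2.2.1])
      exact hpG.2.2.2 (hvT ▸ this)
  have havoid := CRch.avoid hNT hcl
  -- Step 1 : p is not reachable avoiding {q, t}
  have hQ : ¬ CRch B N {q, t} p := fun hcr => (havoid p hcr).1 (Or.inr rfl)
  -- Step 2 : t ≠ q
  have htq : t ≠ q := by
    intro h
    have : ({q, t} : Set V) = {q} := by rw [h]; simp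
    exact hQ (by rw [this]; exact h2c1 q p hpW hpq)
  have hpt : p ≠ t := hpG.2.2.1
  have hp4 : Frag2 B N W q t p := ⟨hpW, hpq, hpt, hQ⟩
  by_cases htK : Frag2 B N W p q t
  · exact lemR' h2c1 htK hp4
  · -- K ∪ {p} ⊆ Frag2set q t, contradicting maximality
    have hsubK : {z | Frag2 B N W p q z} ∪ {p} ⊆ {z | Frag2 B N W q t z} := by
      intro w hw
      rcases hw with hw | hw
      · refine ⟨hw.1, hw.2.2.1, ?_, fun hcr => (havoid w hcr).1 (Or.inl hw)⟩
        intro h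
        exact htK (h ▸ hw)
      · exact hw ▸ hp4
    have hplt : {z | Frag2 B N W p q z} ⊂ {z | Frag2 B N W q t z} := by
      refine ⟨subset_trans (Set.subset_union_left) hsubK, fun hc => ?_⟩
      have hpin : p ∈ {z | Frag2 B N W q t z} := hp4
      have : p ∈ {z | Frag2 B N W p q z} := hc hpin
      exact this.2.1 rfl
    have := Set.ncard_lt_ncard hplt (Set.toFinite _)
    exact absurd (hmax q t p hp4) (by omega)
end

/-- `(x,u)` is a good pair: `u` is an in-neighbour on the root side of every
pair cut through `x`. -/
def GoodPair (B : V → V → Prop) (N : Set V) (W : Finset V) (x u : V) : Prop :=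
  ∀ s, (∃ z, Frag2 B N W x s z) → CRch B N {x, s} u

include hBW h2c1 in
/-- Descent: starting from a maximum fragment, repeatedly shrink to find a good pair. -/
theorem descent [Fintype V] {p q : V}
    (hmax : ∀ a b z, Frag2 B N W a b z →
      {z | Frag2 B N W a b z}.ncard ≤ {z | Frag2 B N W p q z}.ncard) :
    ∀ n : ℕ, ∀ c : V, (∀ z, Frag2 B N W p c z → Frag2 B N W p q z) →
      (∃ f, Frag2 B N W p c f) → {z | Frag2 B N W p c z}.ncard ≤ n →
      ∃ x u, x ∈ W ∧ x ∉ N ∧ B u x ∧ GoodPair B N W x u := by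
  intro n
  induction n with
  | zero =>
    intro c _ ⟨f, hf⟩ hcard
    have : f ∈ {z | Frag2 B N W p c z} := hf
    have h1 : 0 < {z | Frag2 B N W p c z}.ncard :=
      Set.ncard_pos (Set.toFinite _) |>.mpr ⟨f, hf⟩
    omega
  | succ n ih =>
    intro c hsub ⟨f, hf⟩ hcard
    obtain ⟨v, hpv, hv⟩ := frag_entry hBW h2c1 hf
    by_cases hgood : GoodPair B N W v p
    · exact ⟨v, p, hv.1, hv.notN, hpv, hgood⟩
    · rw [GoodPair] at hgood
      push_neg at hgood
      obtain ⟨s, ⟨z, hz⟩, hns⟩ := hgood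
      by_cases hsp : s = p
      · -- new, strictly smaller fragment for the cut {p, v}
        rw [hsp] at hz
        have hz' : Frag2 B N W p v z := hz.comm
        have hsub' : ∀ w, Frag2 B N W p v w → Frag2 B N W p q w := by
          intro w hw
          by_cases hwc : w = c
          · exact absurd (hwc ▸ hw) (fun hq' => lemR h2c1 hv hq')
          · exact hsub w (frag_containment h2c1 hv hw hwc)
        have hsubset : {w | Frag2 B N W p v w} ⊆ {w | Frag2 B N W p c w} \ {v} := by
          intro w hw
          refine ⟨?_, ?_⟩
          · by_cases hwc : w = c
            · exact absurd (hwc ▸ hw) (fun hq' => lemR h2c1 hv hq')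
            · exact frag_containment h2c1 hv hw hwc
          · simp only [Set.mem_singleton_iff]
            intro h
            exact (h ▸ hw).2.2.1 rfl
        have hvmem : v ∈ {w | Frag2 B N W p c w} := hv
        have hcard' : {w | Frag2 B N W p v w}.ncard ≤ n := by
          have h1 : ({w | Frag2 B N W p c w} \ {v}).ncard =
              {w | Frag2 B N W p c w}.ncard - 1 :=
            Set.ncard_diff_singleton_of_mem hvmem
          have h2 : {w | Frag2 B N W p v w}.ncard ≤
              ({w | Frag2 B N W p c w} \ {v}).ncard :=
            Set.ncard_le_ncard hsubset (Set.toFinite _)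
          have h3 : 0 < {z | Frag2 B N W p c z}.ncard :=
            Set.ncard_pos (Set.toFinite _) |>.mpr ⟨f, hf⟩
          omega
        exact ih v hsub' ⟨z, hz'⟩ hcard'
      · -- p is trapped in a fragment of {v, s} : contradiction via Lemma C
        have hpW : p ∈ W := (hBW p v hpv).1
        have hp4 : Frag2 B N W v s p :=
          ⟨hpW, fun h => hv.2.1 h.symm, fun h => hsp h.symm, hns⟩
        exact absurd (lemC h2c1 hmax (hsub v hv) hp4) id

include hBW h2c1 in
theorem goodPair_exists [Fintype V]
    (h2c0 : ∀ z ∈ W, CRch B N (∅ : Set V) z)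
    (hne : ∃ x ∈ W, x ∉ N) :
    ∃ x u, x ∈ W ∧ x ∉ N ∧ B u x ∧ GoodPair B N W x u := by
  by_cases hcut : ∃ a b z, Frag2 B N W a b z
  · obtain ⟨a₀, b₀, z₀, h₀⟩ := hcut
    -- choose a maximizing pair
    classical
    obtain ⟨⟨p, q⟩, -, hab⟩ := Finset.exists_max_image (Finset.univ : Finset (V × V))
      (fun ab => {z | Frag2 B N W ab.1 ab.2 z}.ncard) ⟨(a₀, b₀), Finset.mem_univ _⟩
    have hmax : ∀ a b z, Frag2 B N W a b z →
        {z | Frag2 B N W a b z}.ncard ≤ {z | Frag2 B N W p q z}.ncard := by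
      intro a b z _
      exact hab (a, b) (Finset.mem_univ _)
    by_cases hKne : ∃ f, Frag2 B N W p q f
    · exact descent hBW h2c1 hmax _ q (fun z h => h) hKne le_rfl
    · -- the maximum is 0, so no fragment anywhere : contradiction
      exfalso
      have h1 : {z | Frag2 B N W p q z}.ncard = 0 := by
        have : {z | Frag2 B N W p q z} = ∅ := by
          ext z; simp only [Set.mem_setOf_eq, Set.mem_empty_iff_false, iff_false]
          exact fun h => hKne ⟨z, h⟩
        simp [this]
      have h2 : 0 < {z | Frag2 B N W a₀ b₀ z}.ncard :=
        Set.ncard_pos (Set.toFinite _) |>.mpr ⟨z₀, h₀⟩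
      have := hmax a₀ b₀ z₀ h₀
      omega
  · obtain ⟨x, hxW, hxN⟩ := hne
    have hx : CRch B N ∅ x := h2c0 x hxW
    rcases hx.cases' with ⟨hxn, _⟩ | ⟨w, hBwx, _, _⟩
    · exact absurd hxn hxN
    · exact ⟨x, w, hxW, hxN, hBwx, fun s ⟨z, hz⟩ => absurd ⟨x, s, z, hz⟩ hcut⟩

end Core

/-- The reduced digraph: delete `x`, rerouting its out-arcs through `u`. -/
def RedB (B : V → V → Prop) (x u : V) : V → V → Prop :=
  fun a b => (B a b ∧ a ≠ x ∧ b ≠ x) ∨ (a = u ∧ B x b ∧ b ≠ u ∧ b ≠ x)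

section Rescue

variable {B : V → V → Prop} {N : Set V} {W : Finset V} {x u : V}

/-- Transfer: a `B`-path avoiding `x` is a `RedB`-path. -/
theorem red_of_CR (hxN : x ∉ N) {S : Set V} {z : V}
    (h : CRch B N (insert x S) z) : CRch (RedB B x u) N S z := by
  have hzx' : z ≠ x := fun hzx => (hzx ▸ h).notMem (Set.mem_insert x S)
  obtain ⟨n, hn, hnS, hp⟩ := h
  have hnx : n ≠ x := fun h => hxN (h ▸ hn)
  have hnS' : n ∉ S := fun h => hnS (Set.mem_insert_iff.mpr (Or.inr h))
  refine ⟨n, hn, hnS', ?_⟩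
  have : ∀ e, Relation.ReflTransGen (fun a b => B a b ∧ b ∉ insert x S) n e → e ≠ x →
      Relation.ReflTransGen (fun a b => RedB B x u a b ∧ b ∉ S) n e := by
    intro e he
    induction he with
    | refl => intro _; exact Relation.ReflTransGen.refl
    | tail hab h ih =>
      rename_i b c
      intro _
      have hbx : b ≠ x := by
        cases hab.cases_tail with
        | inl h' => exact h' ▸ hnx
        | inr h' =>
          obtain ⟨_, _, hs⟩ := h'
          exact fun hh => hs.2 (hh ▸ Set.mem_insert x S)
      have hcx : c ≠ x := fun hh => h.2 (hh ▸ Set.mem_insert x S)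
      have hcS : c ∉ S := fun hh => h.2 (Set.mem_insert_iff.mpr (Or.inr hh))
      exact (ih hbx).tail ⟨Or.inl ⟨h.1, hbx, hcx⟩, hcS⟩
  exact this z hp hzx'

/-- `RedB`-paths automatically avoid `x`. -/
theorem red_avoid_x (hxN : x ∉ N) {S : Set V} {z : V}
    (h : CRch (RedB B x u) N S z) : CRch (RedB B x u) N (insert x S) z := by
  obtain ⟨n, hn, hnS, hp⟩ := h
  have hnx : n ≠ x := fun h => hxN (h ▸ hn)
  refine ⟨n, hn, by simp [hnx, hnS], ?_⟩
  refine Relation.ReflTransGen.mono (fun a b hab => ⟨hab.1, ?_⟩) _ _ hp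
  have hbx : b ≠ x := by
    rcases hab.1 with h' | h'
    · exact h'.2.2
    · exact h'.2.2.2
  simp [hbx, hab.2]

/-- Suffix extraction: a path to `z` avoiding `s` but with `z` cut off by `{x,s}`
yields a suffix from an out-neighbour of `x` avoiding `{x,s}`. -/
theorem suffix_lemma (hxN : x ∉ N) {s z : V}
    (hz : CRch B N {s} z) (hnz : ¬ CRch B N {x, s} z) (hzx : z ≠ x) :
    ∃ z₁, B x z₁ ∧ z₁ ≠ s ∧ z₁ ≠ x ∧
      Relation.ReflTransGen (fun a b => B a b ∧ b ∉ ({x, s} : Set V)) z₁ z := by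
  obtain ⟨n, hn, hnS, hp⟩ := hz
  have hns : n ≠ s := by simpa using hnS
  have key : ∀ e, Relation.ReflTransGen (fun a b => B a b ∧ b ∉ ({s} : Set V)) n e →
      e ≠ x → ¬ CRch B N {x, s} e →
      ∃ z₁, B x z₁ ∧ z₁ ≠ s ∧ z₁ ≠ x ∧
        Relation.ReflTransGen (fun a b => B a b ∧ b ∉ ({x, s} : Set V)) z₁ e := by
    intro e he
    induction he with
    | refl =>
      intro hex hecr
      exact absurd (CRch.ofN hn (by simp [hex ∘ Eq.symm, hns] at *; tauto)) hecr
    | tail hab h ih =>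
      rename_i b c
      intro hcx hccr
      have hcs : c ≠ s := by simpa using h.2
      by_cases hbx : b = x
      · exact ⟨c, hbx ▸ h.1, hcs, hcx, Relation.ReflTransGen.refl⟩
      · by_cases hbcr : CRch B N {x, s} b
        · exact absurd (hbcr.step h.1 (by simp [hcx, hcs])) hccr
        · obtain ⟨z₁, h1, h2, h3, h4⟩ := ih hbx hbcr
          exact ⟨z₁, h1, h2, h3, h4.tail ⟨h.1, by simp [hcx, hcs]⟩⟩
  exact key z hp hzx hnz

variable (hBW : ∀ a b, B a b → a ∈ W ∧ b ∈ W) (hirr : ∀ v, ¬ B v v)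
  (hNW : N ⊆ ↑W)
  (h2c0 : ∀ z ∈ W, CRch B N (∅ : Set V) z)
  (h2c1 : ∀ s z : V, z ∈ W → z ≠ s → CRch B N {s} z)

include hBW hirr in
theorem red_hBW [DecidableEq V] (hux : B u x) :
    ∀ a b, RedB B x u a b → a ∈ W.erase x ∧ b ∈ W.erase x := by
  intro a b hab
  rcases hab with h | h
  · exact ⟨Finset.mem_erase.mpr ⟨h.2.1, (hBW a b h.1).1⟩,
      Finset.mem_erase.mpr ⟨h.2.2, (hBW a b h.1).2⟩⟩
  · refine ⟨Finset.mem_erase.mpr ⟨?_, h.1 ▸ (hBW u x hux).1⟩,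
      Finset.mem_erase.mpr ⟨h.2.2.2, (hBW x b h.2.1).2⟩⟩
    exact h.1 ▸ fun he => hirr x (he ▸ hux)

include hirr in
theorem red_hirr : ∀ v, ¬ RedB B x u v v := by
  intro v hv
  rcases hv with h | h
  · exact hirr v h.1
  · exact h.2.2.1 h.1

include h2c1 in
theorem red_h2c0 [DecidableEq V] (hxN : x ∉ N) :
    ∀ z ∈ W.erase x, CRch (RedB B x u) N (∅ : Set V) z := by
  intro z hz
  obtain ⟨hzx, hzW⟩ := Finset.mem_erase.mp hz
  have : CRch B N (insert x ∅) z := by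
    simpa using h2c1 x z hzW hzx
  exact red_of_CR hxN this

include h2c1 in
theorem red_h2c1 [DecidableEq V] (hxN : x ∉ N) (hgood : GoodPair B N W x u) :
    ∀ s z : V, z ∈ W.erase x → z ≠ s → CRch (RedB B x u) N {s} z := by
  intro s z hz hzs
  obtain ⟨hzx, hzW⟩ := Finset.mem_erase.mp hz
  by_cases hcr : CRch B N {x, s} z
  · exact red_of_CR hxN (by simpa using hcr)
  · have hfz : Frag2 B N W x s z := ⟨hzW, hzx, hzs, hcr⟩
    have hu : CRch B N {x, s} u := hgood s ⟨z, hfz⟩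
    have hu' : CRch (RedB B x u) N {s} u := red_of_CR hxN (by simpa using hu)
    obtain ⟨z₁, hxz₁, hz₁s, hz₁x, hsuf⟩ :=
      suffix_lemma hxN (h2c1 s z hzW hzs) hcr hzx
    -- get from u to z₁ in the reduced digraph
    have hstart : CRch (RedB B x u) N {s} z₁ := by
      by_cases hz₁u : z₁ = u
      · exact hz₁u ▸ hu'
      · exact hu'.step (Or.inr ⟨rfl, hxz₁, hz₁u, hz₁x⟩) (by simp [hz₁s])
    -- transfer the suffix
    have : ∀ e, Relation.ReflTransGen (fun a b => B a b ∧ b ∉ ({x, s} : Set V)) z₁ e →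
        CRch (RedB B x u) N {s} e := by
      intro e he
      induction he with
      | refl => exact hstart
      | tail hab h ih =>
        rename_i b c
        have hbx : b ≠ x := by
          cases hab.cases_tail with
          | inl h' => exact h' ▸ hz₁x
          | inr h' => obtain ⟨_, _, hs'⟩ := h'; simpa using (fun hh => hs'.2 (by simp [hh]))
        have hcx : c ≠ x := by simpa using (fun hh => h.2 (by simp [hh]))
        have hcs : c ≠ s := by simpa using (fun hh => h.2 (by simp [hh]))
        exact ih.step (Or.inl ⟨h.1, hbx, hcx⟩) (by simp [hcs])
    exact this z hsuf

end Rescue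

section Main

variable {N : Set V}

theorem core_numbering [Fintype V] [DecidableEq V] :
    ∀ (n : ℕ) (B : V → V → Prop) (W : Finset V), W.card ≤ n →
      (∀ a b, B a b → a ∈ W ∧ b ∈ W) → (∀ v, ¬ B v v) → N ⊆ ↑W →
      (∀ z ∈ W, CRch B N (∅ : Set V) z) →
      (∀ s z : V, z ∈ W → z ≠ s → CRch B N {s} z) →
      ∃ σ : V → ℕ, Set.InjOn σ ↑W ∧
        ∀ z ∈ W, z ∉ N → ∃ a b, B a z ∧ B b z ∧ σ a < σ z ∧ σ z < σ b := by
  intro n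
  induction n with
  | zero =>
    intro B W hcard hBW hirr hNW h2c0 h2c1
    have hW : W = ∅ := Finset.card_eq_zero.mp (Nat.le_zero.mp hcard)
    exact ⟨fun v => ((Fintype.equivFin V) v : ℕ),
      fun a _ b _ h => (Fintype.equivFin V).injective (Fin.val_injective h),
      fun z hz => by simp [hW] at hz⟩
  | succ n ih =>
    intro B W hcard hBW hirr hNW h2c0 h2c1
    by_cases hne : ∃ x ∈ W, x ∉ N
    · obtain ⟨x, u, hxW, hxN, hux, hgood⟩ := goodPair_exists hBW h2c1 h2c0 hne
      have hcard' : (W.erase x).card ≤ n := by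
        have := Finset.card_erase_of_mem hxW
        omega
      have hNW' : N ⊆ ↑(W.erase x) := by
        intro m hm
        simp only [Finset.coe_erase, Set.mem_diff, Set.mem_singleton_iff]
        exact ⟨hNW hm, fun h => hxN (h ▸ hm)⟩
      obtain ⟨σ', hinj', hstr'⟩ := ih (RedB B x u) (W.erase x) hcard'
        (red_hBW hBW hirr hux) (red_hirr hirr) hNW'
        (red_h2c0 h2c1 hxN) (red_h2c1 h2c1 hxN hgood)
      have hu_xne : x ≠ u := fun h => hirr x (h ▸ hux)
      have huW : u ∈ W.erase x := Finset.mem_erase.mpr ⟨fun h => hirr x (h ▸ hux),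
        (hBW u x hux).1⟩
      -- a second in-neighbour of x
      obtain ⟨w, hwB, hwu, -⟩ : ∃ w, B w x ∧ w ∉ ({u} : Set V) ∧ CRch B N {u} w := by
        rcases (h2c1 u x hxW hu_xne).cases' with ⟨hxn, _⟩ | hh
        · exact absurd hxn hxN
        · exact hh
      have hwu' : w ≠ u := by simpa using hwu
      have hwW : w ∈ W.erase x := Finset.mem_erase.mpr ⟨fun h => hirr x (h ▸ hwB),
        (hBW w x hwB).1⟩
      -- choose the insertion point
      obtain ⟨c, wit, hwitB, hwitne, hc⟩ :
          ∃ c wit, B wit x ∧ wit ≠ x ∧ ((σ' u < σ' wit ∧ c = 2 * σ' u + 3) ∨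
            (σ' wit < σ' u ∧ c = 2 * σ' u + 1)) := by
        by_cases hs : ∃ w', B w' x ∧ w' ≠ u ∧ σ' u < σ' w'
        · obtain ⟨w', h1, h2, h3⟩ := hs
          exact ⟨2 * σ' u + 3, w', h1, fun h => hirr x (h ▸ h1), Or.inl ⟨h3, rfl⟩⟩
        · push_neg at hs
          have hle : σ' w ≤ σ' u := hs w hwB hwu'
          have hne' : σ' w ≠ σ' u := fun h => hwu' (hinj' hwW huW h)
          exact ⟨2 * σ' u + 1, w, hwB, fun h => hirr x (h ▸ hwB),
            Or.inr ⟨lt_of_le_of_ne hle hne', rfl⟩⟩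
      refine ⟨fun v => if v = x then c else 2 * σ' v + 2, ?_, ?_⟩
      · -- injectivity
        intro v₁ hv₁ v₂ hv₂ heq
        by_cases h1 : v₁ = x <;> by_cases h2 : v₂ = x <;>
          simp only [h1, h2, if_pos, if_neg, if_true, if_false] at heq
        · exact h1.trans h2.symm
        · exfalso; rcases hc with ⟨_, hc⟩ | ⟨_, hc⟩ <;> omega
        · exfalso; rcases hc with ⟨_, hc⟩ | ⟨_, hc⟩ <;> omega
        · have : σ' v₁ = σ' v₂ := by omega
          exact hinj' (Finset.mem_erase.mpr ⟨h1, hv₁⟩) (Finset.mem_erase.mpr ⟨h2, hv₂⟩) this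
      · -- the straddle condition
        intro z hzW hzN
        by_cases hzx : z = x
        · subst hzx
          rcases hc with ⟨hlt, hc⟩ | ⟨hlt, hc⟩
          · refine ⟨u, wit, hux, hwitB, ?_, ?_⟩ <;>
              simp only [if_pos rfl, if_neg hu_xne.symm, if_neg hwitne, if_true] <;> omega
          · refine ⟨wit, u, hwitB, hux, ?_, ?_⟩ <;>
              simp only [if_pos rfl, if_neg hu_xne.symm, if_neg hwitne, if_true] <;> omega
        · have hzW' : z ∈ W.erase x := Finset.mem_erase.mpr ⟨hzx, hzW⟩
          obtain ⟨a, b, haB, hbB, halt, hblt⟩ := hstr' z hzW' hzN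
          have hcb : 2 * σ' u + 1 ≤ c ∧ c ≤ 2 * σ' u + 3 := by
            rcases hc with ⟨_, hc⟩ | ⟨_, hc⟩ <;> omega
          have hlow : ∃ a', B a' z ∧ (if a' = x then c else 2 * σ' a' + 2) < 2 * σ' z + 2 := by
            rcases haB with ⟨hB, hax, -⟩ | ⟨hau, hBxz, -, -⟩
            · exact ⟨a, hB, by simp only [if_neg hax]; omega⟩
            · refine ⟨x, hBxz, by simp only [if_pos rfl, if_true]; rw [hau] at halt; omega⟩
          have hhigh : ∃ b', B b' z ∧ 2 * σ' z + 2 < (if b' = x then c else 2 * σ' b' + 2) := by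
            rcases hbB with ⟨hB, hbx, -⟩ | ⟨hbu, hBxz, -, -⟩
            · exact ⟨b, hB, by simp only [if_neg hbx]; omega⟩
            · refine ⟨x, hBxz, by simp only [if_pos rfl, if_true]; rw [hbu] at hblt; omega⟩
          obtain ⟨a', ha'B, ha'lt⟩ := hlow
          obtain ⟨b', hb'B, hb'lt⟩ := hhigh
          refine ⟨a', b', ha'B, hb'B, ?_, ?_⟩
          · show (if a' = x then c else 2 * σ' a' + 2) < (if z = x then c else 2 * σ' z + 2)
            rw [if_neg hzx]; exact ha'lt
          · show (if z = x then c else 2 * σ' z + 2) < (if b' = x then c else 2 * σ' b' + 2)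
            rw [if_neg hzx]; exact hb'lt
    · -- all active vertices are in N
      refine ⟨fun v => ((Fintype.equivFin V) v : ℕ),
        fun a _ b _ h => (Fintype.equivFin V).injective (Fin.val_injective h),
        fun z hz hzN => ?_⟩
      push_neg at hne
      exact absurd (hne z hz) hzN

end Main

section Translate

variable {A : V → V → Prop} {r : V}

theorem conv_reach (hirrA : ∀ v, ¬ A v v) (hnoin : ∀ v, ¬ A v r) {S : Set V} {z : V}
    (h : ReachesAvoiding A S r z) (hz : z ≠ r) :
    CRch (fun a b => A a b ∧ a ≠ r ∧ b ≠ r) {v | A r v} S z := by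
  induction h with
  | refl => exact absurd rfl hz
  | tail hab h ih =>
    rename_i b c
    have hcr : c ≠ r := fun hh => hnoin b (hh ▸ h.1)
    by_cases hbr : b = r
    · exact CRch.ofN (by simpa using hbr ▸ h.1) h.2.2
    · exact (ih hbr).step ⟨h.1, hbr, hcr⟩ h.2.2

theorem avoid_root (hnoin : ∀ v, ¬ A v r) {z : V} {S : Set V}
    (h : CRch (fun a b => A a b ∧ a ≠ r ∧ b ≠ r) {v | A r v} S z) :
    CRch (fun a b => A a b ∧ a ≠ r ∧ b ≠ r) {v | A r v} (insert r S) z := by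
  obtain ⟨n, hn, hnS, hp⟩ := h
  have hnr : n ≠ r := fun hh => hnoin r (hh ▸ hn)
  exact ⟨n, hn, by simp [hnr, hnS], Relation.ReflTransGen.mono (fun a b hab => ⟨hab.1, by
    simp [hab.1.2.2, hab.2]⟩) _ _ hp⟩

end Translate

theorem rr_numbering_exists [Fintype V] (A : V → V → Prop) (r : V)
    (hD : IsRootedDigraph A r) (h2 : TwoConnected A r) :
    ∃ σ : V → ℕ, Set.InjOn σ {v | v ≠ r} ∧
      ∀ x, x ≠ r →
        (A r x ∨ ∃ u v, u ≠ r ∧ v ≠ r ∧ A u x ∧ A v x ∧ σ u < σ x ∧ σ x < σ v) := by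
  classical
  obtain ⟨hirrA, hnoin, -, -⟩ := hD
  set B : V → V → Prop := fun a b => A a b ∧ a ≠ r ∧ b ≠ r with hBdef
  set N : Set V := {v | A r v} with hNdef
  set W : Finset V := Finset.univ.erase r with hWdef
  have hmemW : ∀ v : V, v ∈ W ↔ v ≠ r := by
    intro v; simp [hWdef]
  have hBW : ∀ a b, B a b → a ∈ W ∧ b ∈ W := by
    intro a b hab
    exact ⟨(hmemW a).mpr hab.2.1, (hmemW b).mpr hab.2.2⟩
  have hirr : ∀ v, ¬ B v v := fun v hv => hirrA v hv.1
  have hNW : N ⊆ ↑W := by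
    intro v hv
    have hv' : A r v := hv
    have : v ≠ r := fun hh => hirrA r (hh ▸ hv')
    simp [hWdef, this]
  have hRA : ∀ S : Set V, S.ncard ≤ 1 → r ∉ S → ∀ z ∉ S, ReachesAvoiding A S r z := by
    intro S hS hrS z hzS
    by_contra hcon
    exact h2 S hS ⟨hrS, z, hzS, hcon⟩
  have h2c0 : ∀ z ∈ W, CRch B N (∅ : Set V) z := by
    intro z hz
    have hzr := (hmemW z).mp hz
    exact conv_reach hirrA hnoin
      (hRA ∅ (by simp) (by simp) z (by simp)) hzr
  have h2c1 : ∀ s z : V, z ∈ W → z ≠ s → CRch B N {s} z := by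
    intro s z hz hzs
    have hzr := (hmemW z).mp hz
    by_cases hsr : s = r
    · subst hsr
      have := avoid_root hnoin (h2c0 z hz)
      simpa using this
    · exact conv_reach hirrA hnoin
        (hRA {s} (by simp) (by simp [Ne.symm hsr]) z (by simp [hzs])) hzr
  obtain ⟨σ, hinj, hstr⟩ := core_numbering (N := N) W.card B W le_rfl hBW hirr hNW h2c0 h2c1
  have hset : (↑W : Set V) = {v : V | v ≠ r} := by
    ext v; simp [hWdef]
  refine ⟨σ, hset ▸ hinj, ?_⟩
  intro x hxr
  by_cases hAx : A r x
  · exact Or.inl hAx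
  · have hxW : x ∈ W := (hmemW x).mpr hxr
    have hxN : x ∉ N := hAx
    obtain ⟨a, b, haB, hbB, h1, h2'⟩ := hstr x hxW hxN
    exact Or.inr ⟨a, b, haB.2.1, hbB.2.1, haB.1, hbB.1, h1, h2'⟩
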